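/- Let (M, d) be a metric space, Θ ⊆ M permeable, and (Y, d_Y) a metric space. If f : M → Y is continuous and its restriction to E = M \ Θ is L-Lipschitz with respect to the intrinsic metric ρ_E on E, then f is L-Lipschitz on all of M with respect to the intrinsic metric ρ_M. -/

import Mathlib

open Set MeasureTheory ENNReal

section Defs

variable {M : Type*} [MetricSpace M]

/-- `γ` is a path in `E` from `x` to `y` parametrized on `[a,b]`. -/
def IsPathIn (E : Set M) (γ : ℝ → M) (a b : ℝ) (x y : M) : Prop :=
  a ≤ b ∧ ContinuousOn γ (Set.Icc a b) ∧ γ a = x ∧ γ b = y ∧ ∀ t ∈ Set.Icc a b, γ t ∈ E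

/-- Length of a path: total variation over `[a,b]`. -/
noncomputable def pathLength (γ : ℝ → M) (a b : ℝ) : ℝ≥0∞ := eVariationOn γ (Set.Icc a b)

/-- Intrinsic metric on `E`: infimum of lengths of finite-length paths in `E`. -/
noncomputable def intrinsicDist (E : Set M) (x y : M) : ℝ≥0∞ :=
  sInf { L | ∃ γ a b, IsPathIn E γ a b x y ∧ pathLength γ a b < ⊤ ∧ pathLength γ a b = L }

/-- `Θ`-intrinsic metric relative to ambient set `N`: only paths whose intersection with `Θ`
has countable closure (closure taken in the subspace `N`) are allowed. -/
noncomputable def thetaDistIn (N Θ : Set M) (x y : M) : ℝ≥0∞ :=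
  sInf { L | ∃ γ a b, IsPathIn N γ a b x y ∧ pathLength γ a b < ⊤ ∧
    (closure (γ '' Set.Icc a b ∩ Θ) ∩ N).Countable ∧ pathLength γ a b = L }

/-- `Θ`-finite intrinsic metric relative to ambient set `N`: only paths meeting `Θ` in finitely
many points are allowed. -/
noncomputable def thetaFinDistIn (N Θ : Set M) (x y : M) : ℝ≥0∞ :=
  sInf { L | ∃ γ a b, IsPathIn N γ a b x y ∧ pathLength γ a b < ⊤ ∧
    (γ '' Set.Icc a b ∩ Θ).Finite ∧ pathLength γ a b = L }

/-- `Θ` is permeable relative to `N`. -/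
def PermeableIn (N Θ : Set M) : Prop :=
  ∀ x ∈ N, ∀ y ∈ N, thetaDistIn N Θ x y = intrinsicDist N x y

/-- `Θ` is finitely permeable relative to `N`. -/
def FinitelyPermeableIn (N Θ : Set M) : Prop :=
  ∀ x ∈ N, ∀ y ∈ N, thetaFinDistIn N Θ x y = intrinsicDist N x y

/-- `Θ` is permeable (relative to the whole space). -/
def Permeable (Θ : Set M) : Prop := PermeableIn Set.univ Θ

/-- `Θ` is finitely permeable (relative to the whole space). -/
def FinitelyPermeable (Θ : Set M) : Prop := FinitelyPermeableIn Set.univ Θ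

end Defs

lemma evar_Icc_add_Icc {M : Type*} [PseudoEMetricSpace M] (γ : ℝ → M) {a b c : ℝ}
    (hab : a ≤ b) (hbc : b ≤ c) :
    eVariationOn γ (Icc a b) + eVariationOn γ (Icc b c) = eVariationOn γ (Icc a c) := by
  have := eVariationOn.Icc_add_Icc γ (s := univ) hab hbc (mem_univ b)
  simpa [univ_inter] using this

lemma finSuper {M : Type*} [PseudoEMetricSpace M] (γ : ℝ → M) {ι : Type*} [LinearOrder ι]
    (S T : ι → ℝ) (s : Finset ι) :
    ∀ (a b : ℝ), (∀ i ∈ s, a ≤ S i) → (∀ i ∈ s, S i ≤ T i) → (∀ i ∈ s, T i ≤ b) →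
    (∀ i ∈ s, ∀ j ∈ s, i < j → T i ≤ S j) →
    ∑ i ∈ s, eVariationOn γ (Icc (S i) (T i)) ≤ eVariationOn γ (Icc a b) := by
  classical
  induction s using Finset.induction_on_max with
  | empty => simp
  | insert j s hj ih =>
    intro a b haS hST hTb hord
    have hjs : j ∉ s := fun h => lt_irrefl j (hj j h)
    rw [Finset.sum_insert hjs]
    have hmem : ∀ i ∈ s, i ∈ insert j s := fun i hi => Finset.mem_insert_of_mem hi
    have hIH : ∑ i ∈ s, eVariationOn γ (Icc (S i) (T i)) ≤ eVariationOn γ (Icc a (S j)) :=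
      ih a (S j) (fun i hi => haS i (hmem i hi)) (fun i hi => hST i (hmem i hi))
        (fun i hi => hord i (hmem i hi) j (Finset.mem_insert_self j s) (hj i hi))
        (fun i hi k hk h => hord i (hmem i hi) k (hmem k hk) h)
    have haj : a ≤ S j := haS j (Finset.mem_insert_self j s)
    have hjj : S j ≤ T j := hST j (Finset.mem_insert_self j s)
    calc eVariationOn γ (Icc (S j) (T j)) + ∑ i ∈ s, eVariationOn γ (Icc (S i) (T i))
        ≤ eVariationOn γ (Icc (S j) (T j)) + eVariationOn γ (Icc a (S j)) :=
          add_le_add_right hIH _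
      _ = eVariationOn γ (Icc a (T j)) := by
          rw [add_comm]; exact evar_Icc_add_Icc γ haj hjj
      _ ≤ eVariationOn γ (Icc a b) :=
          eVariationOn.mono γ (Icc_subset_Icc le_rfl (hTb j (Finset.mem_insert_self j s)))

lemma keyPath {M Y : Type*} [MetricSpace M] [MetricSpace Y]
    (Θ : Set M) (f : M → Y) (hf : Continuous f) (L : NNReal)
    (hLip : ∀ x ∈ Θᶜ, ∀ y ∈ Θᶜ, intrinsicDist Θᶜ x y < ⊤ →
      edist (f x) (f y) ≤ L * intrinsicDist Θᶜ x y)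
    (γ : ℝ → M) (a b : ℝ) (hab : a ≤ b) (hcont : ContinuousOn γ (Icc a b))
    (hV : eVariationOn γ (Icc a b) < ⊤)
    (hcnt : (closure (γ '' Icc a b ∩ Θ)).Countable) :
    edist (f (γ a)) (f (γ b)) ≤ L * eVariationOn γ (Icc a b) := by
  classical
  set D := closure (γ '' Icc a b ∩ Θ) with hD
  set C := Icc a b ∩ γ ⁻¹' D with hCdef
  have hCclosed : IsClosed C := hcont.preimage_isClosed_of_isClosed isClosed_Icc isClosed_closure
  have hCsub : C ⊆ Icc a b := inter_subset_left
  have hnotΘ : ∀ t ∈ Icc a b, t ∉ C → γ t ∈ Θᶜ := by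
    intro t ht htC hΘt
    exact htC ⟨ht, subset_closure ⟨⟨t, ht, rfl⟩, hΘt⟩⟩
  set u : ℝ → ℝ := fun t => dist (f (γ a)) (f (γ t)) with hu_def
  have hu : ContinuousOn u (Icc a b) := (continuous_const.dist hf).comp_continuousOn hcont
  have hua : u a = 0 := by simp [hu_def]
  -- pair bound on C-free intervals
  have hpair : ∀ s t, s ∈ Icc a b → t ∈ Icc a b → s ≤ t → (∀ r ∈ Icc s t, r ∉ C) →
      edist (f (γ s)) (f (γ t)) ≤ L * eVariationOn γ (Icc s t) := by
    intro s t hs ht hst hdis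
    have hsub : Icc s t ⊆ Icc a b := Icc_subset_Icc hs.1 ht.2
    have hmem : ∀ r ∈ Icc s t, γ r ∈ Θᶜ := fun r hr => hnotΘ r (hsub hr) (hdis r hr)
    have hpathIn : IsPathIn Θᶜ γ s t (γ s) (γ t) := ⟨hst, hcont.mono hsub, rfl, rfl, hmem⟩
    have hlen : pathLength γ s t < ⊤ := lt_of_le_of_lt (eVariationOn.mono γ hsub) hV
    have hle : intrinsicDist Θᶜ (γ s) (γ t) ≤ eVariationOn γ (Icc s t) :=
      sInf_le ⟨γ, s, t, hpathIn, hlen, rfl⟩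
    have hfin : intrinsicDist Θᶜ (γ s) (γ t) < ⊤ := lt_of_le_of_lt hle hlen
    exact (hLip (γ s) (hmem s ⟨le_rfl, hst⟩) (γ t) (hmem t ⟨hst, le_rfl⟩) hfin).trans
      (mul_le_mul_right hle _)
  have hucnt : (u '' C).Countable := by
    have hsub2 : u '' C ⊆ (fun p => dist (f (γ a)) (f p)) '' D := by
      rintro _ ⟨t, htC, rfl⟩; exact ⟨γ t, htC.2, rfl⟩
    exact ((hcnt.image _).mono hsub2)
  set A := Ioo (0:ℝ) (u b) \ u '' C with hAdef
  set m : ℝ → ℝ := fun v => sSup (Icc a b ∩ u ⁻¹' {v}) with hmdef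
  have hm : ∀ v ∈ A, m v ∈ Icc a b ∧ u (m v) = v := by
    intro v hv
    have hne : (Icc a b ∩ u ⁻¹' {v}).Nonempty := by
      have hIv : v ∈ Icc (u a) (u b) := ⟨hua ▸ hv.1.1.le, hv.1.2.le⟩
      obtain ⟨t, ht, hut⟩ := intermediate_value_Icc hab hu hIv
      exact ⟨t, ht, hut⟩
    have hcl : IsClosed (Icc a b ∩ u ⁻¹' {v}) :=
      hu.preimage_isClosed_of_isClosed isClosed_Icc isClosed_singleton
    have hbdd : BddAbove (Icc a b ∩ u ⁻¹' {v}) := ⟨b, fun x hx => hx.1.2⟩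
    have hmem := hcl.csSup_mem hne hbdd
    exact ⟨hmem.1, hmem.2⟩
  have hmC : ∀ v ∈ A, m v ∉ C := fun v hv h => hv.2 ⟨m v, h, (hm v hv).2⟩
  set αf : ℝ → ℝ := fun t => sSup (insert a (C ∩ Icc a t)) with hαdef
  have hα : ∀ t ∈ Icc a b, (a ≤ αf t ∧ αf t ≤ t) ∧ (αf t = a ∨ αf t ∈ C) ∧
      (∀ s ∈ C, s ≤ t → s ≤ αf t) := by
    intro t ht
    have hcl : IsClosed (insert a (C ∩ Icc a t)) := by
      rw [insert_eq]
      exact isClosed_singleton.union (hCclosed.inter isClosed_Icc)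
    have hne : (insert a (C ∩ Icc a t)).Nonempty := ⟨a, mem_insert _ _⟩
    have hbdd : BddAbove (insert a (C ∩ Icc a t)) := by
      refine ⟨t, ?_⟩
      rintro x (rfl | hx)
      · exact ht.1
      · exact hx.2.2
    have hmem := hcl.csSup_mem hne hbdd
    refine ⟨⟨le_csSup hbdd (mem_insert _ _), ?_⟩, ?_, ?_⟩
    · exact csSup_le hne (by rintro x (rfl | hx); exacts [ht.1, hx.2.2])
    · rcases hmem with h | h
      · exact Or.inl h
      · exact Or.inr h.1
    · intro s hs hst
      exact le_csSup hbdd (mem_insert_of_mem _ ⟨hs, (hCsub hs).1, hst⟩)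
  set F : ℝ → ℝ := fun v => αf (m v) with hFdef
  have hgap : ∀ v ∈ A, ∀ s, F v < s → s ≤ m v → s ∉ C := by
    intro v hv s h1 h2 hsC
    exact absurd ((hα (m v) (hm v hv).1).2.2 s hsC h2) (not_le.mpr h1)
  have hFlt : ∀ v ∈ A, F v < m v := by
    intro v hv
    have h := hα (m v) (hm v hv).1
    rcases lt_or_eq_of_le h.1.2 with h' | h'
    · exact h'
    · exfalso
      rcases h.2.1 with h2 | h2
      · -- F v = a and F v = m v, so m v = a, u (m v) = 0 = v, contradiction
        have : v = 0 := by rw [← (hm v hv).2, ← h', h2, hua]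
        exact absurd (this ▸ hv.1.1) (lt_irrefl 0)
      · exact hmC v hv (h' ▸ h2)
  have haF : ∀ v ∈ A, a ≤ F v := fun v hv => (hα (m v) (hm v hv).1).1.1
  have horder : ∀ v ∈ A, ∀ v' ∈ A, F v < F v' → m v < F v' := by
    intro v hv v' hv' hlt
    rcases (hα (m v') (hm v' hv').1).2.1 with h | h
    · exact absurd (h ▸ hlt) (not_lt.mpr (haF v hv))
    · by_contra hc
      exact hgap v hv (F v') hlt (not_lt.mp hc) h
  -- countability of F '' A
  have hFcnt : (F '' A).Countable := by
    have hex : ∀ α ∈ F '' A, ∃ q : ℚ, ∃ v ∈ A, F v = α ∧ (α : ℝ) < q ∧ (q : ℝ) < m v := by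
      rintro α ⟨v, hv, rfl⟩
      obtain ⟨q, h1, h2⟩ := exists_rat_btwn (hFlt v hv)
      exact ⟨q, v, hv, rfl, h1, h2⟩
    set qf : ℝ → ℚ := fun α =>
      if h : ∃ q : ℚ, ∃ v ∈ A, F v = α ∧ (α : ℝ) < q ∧ (q : ℝ) < m v then h.choose else 0
      with hqfdef
    have hqf : ∀ α ∈ F '' A, ∃ v ∈ A, F v = α ∧ (α : ℝ) < qf α ∧ ((qf α) : ℝ) < m v := by
      intro α hα'
      have h := hex α hα'
      simp only [hqfdef, dif_pos h]
      exact h.choose_spec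
    have hmono : ∀ α₁ ∈ F '' A, ∀ α₂ ∈ F '' A, α₁ < α₂ → (qf α₁ : ℝ) < qf α₂ := by
      intro α₁ h₁ α₂ h₂ hlt
      obtain ⟨v₁, hv₁, hF₁, hq1a, hq1b⟩ := hqf α₁ h₁
      obtain ⟨v₂, hv₂, hF₂, hq2a, hq2b⟩ := hqf α₂ h₂
      have hm1 : m v₁ < α₂ := by
        have := horder v₁ hv₁ v₂ hv₂ (by rw [hF₁, hF₂]; exact hlt)
        rwa [hF₂] at this
      calc (qf α₁ : ℝ) < m v₁ := hq1b
        _ < α₂ := hm1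
        _ < qf α₂ := hq2a
    have hinj : InjOn qf (F '' A) := by
      intro x hx y hy hxy
      by_contra hne
      rcases lt_or_gt_of_ne hne with h | h
      · exact absurd (hxy ▸ hmono x hx y hy h) (lt_irrefl _)
      · exact absurd (hxy ▸ hmono y hy x hx h) (lt_irrefl _)
    exact MapsTo.countable_of_injOn (mapsTo_univ qf _) hinj countable_univ
  set Aα : ℝ → Set ℝ := fun α => A ∩ F ⁻¹' {α} with hAαdef
  set Mα : ℝ → Set ℝ := fun α => m '' Aα α with hMαdef
  set Sf : ℝ → ℝ := fun α => sInf (Mα α) with hSfdef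
  set Tf : ℝ → ℝ := fun α => sSup (Mα α) with hTfdef
  have hMsub : ∀ α, Mα α ⊆ Icc a b := by
    rintro α _ ⟨v, hv, rfl⟩; exact (hm v hv.1).1
  have hMbddA : ∀ α, BddAbove (Mα α) := fun α => ⟨b, fun x hx => (hMsub α hx).2⟩
  have hMbddB : ∀ α, BddBelow (Mα α) := fun α => ⟨a, fun x hx => (hMsub α hx).1⟩
  have hMne : ∀ α ∈ F '' A, (Mα α).Nonempty := by
    rintro α ⟨v, hv, rfl⟩; exact ⟨m v, mem_image_of_mem m (mem_inter hv rfl)⟩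
  have haS : ∀ α ∈ F '' A, a ≤ Sf α := fun α hα' =>
    le_csInf (hMne α hα') (fun t ht => (hMsub α ht).1)
  have hTb : ∀ α ∈ F '' A, Tf α ≤ b := fun α hα' =>
    csSup_le (hMne α hα') (fun t ht => (hMsub α ht).2)
  have hST : ∀ α ∈ F '' A, Sf α ≤ Tf α := by
    intro α hα'
    obtain ⟨t, ht⟩ := hMne α hα'
    exact (csInf_le (hMbddB α) ht).trans (le_csSup (hMbddA α) ht)
  have horder2 : ∀ α ∈ F '' A, ∀ α' ∈ F '' A, α < α' → Tf α ≤ Sf α' := by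
    intro α hα₁ α' hα₂ hlt
    have h1 : Tf α ≤ α' := by
      apply csSup_le (hMne α hα₁)
      rintro t ht
      obtain ⟨v, hvm, rfl⟩ := ht
      have hvF : F v = α := hvm.2
      obtain ⟨v', hv', hF'⟩ := hα₂
      have : m v < F v' := horder v hvm.1 v' hv' (by rw [hvF, hF']; exact hlt)
      rw [hF'] at this
      exact this.le
    have h2 : α' ≤ Sf α' := by
      apply le_csInf (hMne α' hα₂)
      rintro t ht
      obtain ⟨w, hwm, rfl⟩ := ht
      have hwF : F w = α' := hwm.2
      rw [← hwF]
      exact (hFlt w hwm.1).le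
    exact h1.trans h2
  have hdiam : ∀ α ∈ F '' A, EMetric.diam (Aα α) ≤ (L : ℝ≥0∞) * eVariationOn γ (Icc (Sf α) (Tf α)) := by
    intro α hα'
    have hsym : ∀ v ∈ Aα α, ∀ w ∈ Aα α, m v ≤ m w →
        edist v w ≤ (L : ℝ≥0∞) * eVariationOn γ (Icc (Sf α) (Tf α)) := by
      intro v hv w hw hmvw
      have hvA : v ∈ A := hv.1
      have hwA : w ∈ A := hw.1
      have hCC : ∀ r ∈ Icc (m v) (m w), r ∉ C := by
        intro r hr
        apply hgap w hwA r _ hr.2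
        have hwF : F w = α := hw.2
        have hvF : F v = α := hv.2
        calc F w = F v := by rw [hwF, hvF]
          _ < m v := hFlt v hvA
          _ ≤ r := hr.1
      have h1 : edist (f (γ (m v))) (f (γ (m w))) ≤ (L : ℝ≥0∞) * eVariationOn γ (Icc (m v) (m w)) :=
        hpair (m v) (m w) (hm v hvA).1 (hm w hwA).1 hmvw hCC
      have h2 : edist v w ≤ edist (f (γ (m v))) (f (γ (m w))) := by
        obtain ⟨p, hp⟩ : ∃ p, m v = p := ⟨_, rfl⟩
        obtain ⟨q, hq⟩ : ∃ q, m w = q := ⟨_, rfl⟩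
        have hpv : dist (f (γ p)) (f (γ a)) = v := by
          rw [dist_comm]; rw [← hp]; exact (hm v hvA).2
        have hqw : dist (f (γ q)) (f (γ a)) = w := by
          rw [dist_comm]; rw [← hq]; exact (hm w hwA).2
        rw [hp, hq, edist_dist, edist_dist]
        apply ENNReal.ofReal_le_ofReal
        rw [Real.dist_eq, ← hpv, ← hqw]
        exact abs_dist_sub_le _ _ _
      have h3 : eVariationOn γ (Icc (m v) (m w)) ≤ eVariationOn γ (Icc (Sf α) (Tf α)) := by
        apply eVariationOn.mono
        apply Icc_subset_Icc
        · exact csInf_le (hMbddB α) (mem_image_of_mem m hv)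
        · exact le_csSup (hMbddA α) (mem_image_of_mem m hw)
      exact h2.trans (h1.trans (mul_le_mul_right h3 _))
    apply EMetric.diam_le
    intro v hv w hw
    rcases le_total (m v) (m w) with h | h
    · exact hsym v hv w hw h
    · rw [edist_comm]; exact hsym w hw v hv h
  -- measure chain
  have hAsub : A ⊆ ⋃ α ∈ F '' A, Aα α := by
    intro v hv
    exact mem_biUnion (mem_image_of_mem F hv) (mem_inter hv rfl)
  have h1 : volume A ≤ ∑' α : ↥(F '' A), volume (Aα ↑α) :=
    (measure_mono hAsub).trans (measure_biUnion_le volume hFcnt _)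
  have h2 : ∀ α : ↥(F '' A), volume (Aα ↑α) ≤ (L : ℝ≥0∞) * eVariationOn γ (Icc (Sf ↑α) (Tf ↑α)) :=
    fun α => (Real.volume_le_diam _).trans (hdiam ↑α α.2)
  have h4 : ∑' α : ↥(F '' A), eVariationOn γ (Icc (Sf ↑α) (Tf ↑α)) ≤ eVariationOn γ (Icc a b) := by
    rw [ENNReal.tsum_eq_iSup_sum]
    apply iSup_le
    intro s
    exact finSuper γ (fun i : ↥(F '' A) => Sf ↑i) (fun i => Tf ↑i) s a b
      (fun i _ => haS ↑i i.2) (fun i _ => hST ↑i i.2) (fun i _ => hTb ↑i i.2)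
      (fun i _ j _ hij => horder2 ↑i i.2 ↑j j.2 (Subtype.coe_lt_coe.mpr hij))
  have hchain : volume A ≤ (L : ℝ≥0∞) * eVariationOn γ (Icc a b) := by
    calc volume A ≤ ∑' α : ↥(F '' A), volume (Aα ↑α) := h1
      _ ≤ ∑' α : ↥(F '' A), (L : ℝ≥0∞) * eVariationOn γ (Icc (Sf ↑α) (Tf ↑α)) :=
          ENNReal.tsum_le_tsum h2
      _ = (L : ℝ≥0∞) * ∑' α : ↥(F '' A), eVariationOn γ (Icc (Sf ↑α) (Tf ↑α)) :=
          ENNReal.tsum_mul_left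
      _ ≤ (L : ℝ≥0∞) * eVariationOn γ (Icc a b) := mul_le_mul_right h4 _
  have hA : volume A = ENNReal.ofReal (u b) := by
    rw [hAdef, measure_diff_null (hucnt.measure_zero volume), Real.volume_Ioo, sub_zero]
  rw [edist_dist]
  calc ENNReal.ofReal (dist (f (γ a)) (f (γ b))) = ENNReal.ofReal (u b) := rfl
    _ = volume A := hA.symm
    _ ≤ (L : ℝ≥0∞) * eVariationOn γ (Icc a b) := hchain


/-- Theorem (main): if `Θ` is permeable and `f` is continuous on `M` and intrinsically
`L`-Lipschitz on `E = M \ Θ`, then `f` is intrinsically `L`-Lipschitz on all of `M`. -/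
theorem stmt6 {M Y : Type*} [MetricSpace M] [MetricSpace Y]
    (Θ : Set M) (hΘ : Permeable Θ) (f : M → Y) (hf : Continuous f) (L : NNReal)
    (hLip : ∀ x ∈ Θᶜ, ∀ y ∈ Θᶜ, intrinsicDist Θᶜ x y < ⊤ →
      edist (f x) (f y) ≤ L * intrinsicDist Θᶜ x y) :
    ∀ x y : M, intrinsicDist Set.univ x y < ⊤ →
      edist (f x) (f y) ≤ L * intrinsicDist Set.univ x y := by
  intro x y hxy
  have hperm := hΘ x (mem_univ x) y (mem_univ y)
  rw [← hperm] at hxy ⊢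
  set S := { l | ∃ γ a b, IsPathIn (Set.univ : Set M) γ a b x y ∧ pathLength γ a b < ⊤ ∧
    (closure (γ '' Set.Icc a b ∩ Θ) ∩ Set.univ).Countable ∧ pathLength γ a b = l } with hSdef
  have hSinf : thetaDistIn Set.univ Θ x y = sInf S := rfl
  have hbound : ∀ l ∈ S, edist (f x) (f y) ≤ L * l := by
    rintro l ⟨γ, a, b, ⟨hab, hcont, hγa, hγb, -⟩, hfin, hclos, rfl⟩
    have hcnt : (closure (γ '' Set.Icc a b ∩ Θ)).Countable := by
      simpa using hclos
    have h := keyPath Θ f hf L hLip γ a b hab hcont hfin hcnt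
    rwa [hγa, hγb] at h
  have hne : S.Nonempty := by
    by_contra h
    rw [Set.not_nonempty_iff_eq_empty] at h
    rw [hSinf, h, sInf_empty] at hxy
    exact absurd hxy (lt_irrefl ⊤)
  by_cases hL : (L : ℝ≥0∞) = 0
  · obtain ⟨l, hl⟩ := hne
    have h1 := hbound l hl
    rw [hL, zero_mul] at h1
    rw [hL, zero_mul]
    exact h1
  · have hdiv : edist (f x) (f y) / L ≤ thetaDistIn Set.univ Θ x y := by
      rw [hSinf]
      exact le_sInf (fun l hl => ENNReal.div_le_of_le_mul' (hbound l hl))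
    calc edist (f x) (f y) = L * (edist (f x) (f y) / L) :=
          (ENNReal.mul_div_cancel hL ENNReal.coe_ne_top).symm
      _ ≤ (L : ℝ≥0∞) * thetaDistIn Set.univ Θ x y := mul_le_mul_right hdiv _
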